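/- For every even integer d ≥ 64, the claimed bound of Lemma III.9 of Brandão–Plenio fails: set σ = I_d/d and t = 1/(2d), let P be any orthogonal projection on ℂ^d of rank d/2, and let τ = t·P + 3t·(I_d − P). Then τ is a density matrix with τ − t·I_d positive semidefinite, f_σ(τ) := tr[σ(log₂ τ)²] − (tr[σ log₂ τ])² = (log₂ 3)²/4, and f_σ(τ) > ‖σ‖_∞ · (log₂(1 + t^{−1} − d))² = (log₂(1+d))²/d. -/

import Mathlib

open scoped Kronecker ComplexOrder Classical

noncomputable section

/-- Square complex matrices indexed by `ι`. -/
abbrev MatC (ι : Type*) := Matrix ι ι ℂ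

/-- A density matrix: positive semidefinite with trace one. -/
def IsDensity {ι : Type*} [Fintype ι] (ρ : MatC ι) : Prop :=
  ρ.PosSemidef ∧ ρ.trace = 1

/-- Functional calculus for Hermitian matrices (junk value `0` otherwise). -/
def funCalc {ι : Type*} [Fintype ι] [DecidableEq ι] (X : MatC ι) (f : ℝ → ℝ) : MatC ι :=
  if hX : X.IsHermitian then
    (hX.eigenvectorUnitary : MatC ι) * Matrix.diagonal (fun i => (f (hX.eigenvalues i) : ℂ)) *
      star (hX.eigenvectorUnitary : MatC ι)
  else 0

/-- Real matrix power by functional calculus, with the convention `0 ^ t = 0`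
(powers taken on the support). -/
def matPow {ι : Type*} [Fintype ι] [DecidableEq ι] (X : MatC ι) (t : ℝ) : MatC ι :=
  funCalc X fun x => if x ≤ 0 then 0 else Real.rpow x t

/-- Base-2 matrix logarithm by functional calculus on the support. -/
def matLog2 {ι : Type*} [Fintype ι] [DecidableEq ι] (X : MatC ι) : MatC ι :=
  funCalc X fun x => if x ≤ 0 then 0 else Real.logb 2 x

/-- Trace of the positive part of a Hermitian matrix: the sum of its nonnegative
eigenvalues (junk value `0` for non-Hermitian input). -/
def trPos {ι : Type*} [Fintype ι] [DecidableEq ι] (X : MatC ι) : ℝ :=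
  if hX : X.IsHermitian then ∑ i, max (hX.eigenvalues i) 0 else 0

/-- Largest eigenvalue (operator norm for PSD matrices). -/
def maxEig {ι : Type*} [Fintype ι] [DecidableEq ι] (X : MatC ι) : ℝ :=
  if hX : X.IsHermitian then ⨆ i, hX.eigenvalues i else 0

/-- Support inclusion `supp ρ ⊆ supp σ`, expressed via kernels. -/
def SuppLe {ι : Type*} [Fintype ι] (ρ σ : MatC ι) : Prop :=
  ∀ v : ι → ℂ, σ.mulVec v = 0 → ρ.mulVec v = 0

/-- `−log₂` with the convention `−log₂ 0 = +∞`, valued in extended reals. -/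
def negLog2 (x : ℝ) : EReal := if x ≤ 0 then ⊤ else ((-Real.logb 2 x : ℝ) : EReal)

/-- `log₂` with the convention `log₂ 0 = −∞`, valued in extended reals. -/
def elog2 (x : ℝ) : EReal := if x ≤ 0 then ⊥ else ((Real.logb 2 x : ℝ) : EReal)

/-! ### Channels -/

/-- The Kronecker extension `id_R ⊗ N` of a linear map on matrices. -/
def idTensor (R : Type*) {A B : Type*} (N : MatC A →ₗ[ℂ] MatC B) :
    MatC (R × A) →ₗ[ℂ] MatC (R × B) where
  toFun X := Matrix.of fun p q => N (Matrix.of fun a a' => X (p.1, a) (q.1, a')) p.2 q.2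
  map_add' X Y := by
    ext p q
    show N (Matrix.of fun a a' => (X + Y) (p.1, a) (q.1, a')) p.2 q.2 = _
    have h : (Matrix.of fun a a' => (X + Y) (p.1, a) (q.1, a'))
        = (Matrix.of fun a a' => X (p.1, a) (q.1, a'))
          + (Matrix.of fun a a' => Y (p.1, a) (q.1, a')) := rfl
    rw [h, map_add]; rfl
  map_smul' c X := by
    ext p q
    show N (Matrix.of fun a a' => (c • X) (p.1, a) (q.1, a')) p.2 q.2 = _
    have h : (Matrix.of fun a a' => (c • X) (p.1, a) (q.1, a'))
        = c • (Matrix.of fun a a' => X (p.1, a) (q.1, a')) := rfl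
    rw [h, map_smul]; rfl

/-- The Kronecker extension `N ⊗ id_R`. -/
def tensorId (R : Type*) {A B : Type*} (N : MatC A →ₗ[ℂ] MatC B) :
    MatC (A × R) →ₗ[ℂ] MatC (B × R) where
  toFun X := Matrix.of fun p q => N (Matrix.of fun a a' => X (a, p.2) (a', q.2)) p.1 q.1
  map_add' X Y := by
    ext p q
    show N (Matrix.of fun a a' => (X + Y) (a, p.2) (a', q.2)) p.1 q.1 = _
    have h : (Matrix.of fun a a' => (X + Y) (a, p.2) (a', q.2))
        = (Matrix.of fun a a' => X (a, p.2) (a', q.2))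
          + (Matrix.of fun a a' => Y (a, p.2) (a', q.2)) := rfl
    rw [h, map_add]; rfl
  map_smul' c X := by
    ext p q
    show N (Matrix.of fun a a' => (c • X) (a, p.2) (a', q.2)) p.1 q.1 = _
    have h : (Matrix.of fun a a' => (c • X) (a, p.2) (a', q.2))
        = c • (Matrix.of fun a a' => X (a, p.2) (a', q.2)) := rfl
    rw [h, map_smul]; rfl

/-- Transport of a matrix map along equivalences of index types. -/
def reindexChan {A A' B B' : Type*} (eA : A ≃ A') (eB : B ≃ B')
    (N : MatC A →ₗ[ℂ] MatC B) : MatC A' →ₗ[ℂ] MatC B' :=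
  (Matrix.reindexLinearEquiv ℂ ℂ eB eB).toLinearMap ∘ₗ N ∘ₗ
    (Matrix.reindexLinearEquiv ℂ ℂ eA.symm eA.symm).toLinearMap

/-- The tensor product `N ⊗ M` of two matrix maps. -/
def tensorChan {A B C D : Type*} (N : MatC A →ₗ[ℂ] MatC B) (M : MatC C →ₗ[ℂ] MatC D) :
    MatC (A × C) →ₗ[ℂ] MatC (B × D) :=
  tensorId D N ∘ₗ idTensor A M

/-- The `n`-fold tensor power `N^{⊗n}` of a matrix map, acting on matrices
indexed by `Fin n → A`. -/
def powChan {A B : Type*} (N : MatC A →ₗ[ℂ] MatC B) :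
    (n : ℕ) → (MatC (Fin n → A) →ₗ[ℂ] MatC (Fin n → B))
  | 0 => reindexChan (Equiv.refl _) (Equiv.ofUnique (Fin 0 → A) (Fin 0 → B)) LinearMap.id
  | n + 1 =>
      reindexChan (Fin.consEquiv fun _ : Fin (n + 1) => A) (Fin.consEquiv fun _ : Fin (n + 1) => B)
        (tensorChan N (powChan N n))

/-- Complete positivity and trace preservation (a quantum channel). -/
def IsCPTP {A B : Type*} [Fintype A] [Fintype B] (N : MatC A →ₗ[ℂ] MatC B) : Prop :=
  (∀ (R : Type) (fR : Fintype R) (X : MatC (R × A)),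
      letI := fR
      X.PosSemidef → (idTensor R N X).PosSemidef) ∧
    ∀ X : MatC A, (N X).trace = X.trace

/-- The (unnormalized) maximally entangled projector `|Φ⟩⟨Φ|`. -/
def maxEnt (A : Type*) [DecidableEq A] : MatC (A × A) :=
  Matrix.of fun p q => (if p.1 = p.2 then (1 : ℂ) else 0) * (if q.1 = q.2 then 1 else 0)

/-- The Choi matrix `J_N = (id_A ⊗ N)(|Φ⟩⟨Φ|)`. -/
def choiMat {A B : Type*} [DecidableEq A] (N : MatC A →ₗ[ℂ] MatC B) : MatC (A × B) :=
  idTensor A N (maxEnt A)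

/-! ### State divergences -/

/-- The set of achievable Type II error values for tests with Type I error at most `ε`. -/
def betaSet {ι : Type*} [Fintype ι] [DecidableEq ι] (ε : ℝ) (ρ σ : MatC ι) : Set ℝ :=
  {x | ∃ T : MatC ι, T.PosSemidef ∧ (1 - T).PosSemidef ∧
    1 - ε ≤ ((T * ρ).trace).re ∧ x = ((T * σ).trace).re}

/-- The hypothesis testing relative entropy `D_H^ε(ρ‖σ)`, valued in extended reals. -/
def DHe {ι : Type*} [Fintype ι] [DecidableEq ι] (ε : ℝ) (ρ σ : MatC ι) : EReal :=
  negLog2 (sInf (betaSet ε ρ σ))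

/-- The Umegaki relative entropy `D(ρ‖σ)` (base 2), `+∞` if the support condition fails. -/
def relEnt {ι : Type*} [Fintype ι] [DecidableEq ι] (ρ σ : MatC ι) : EReal :=
  if SuppLe ρ σ then (((ρ * (matLog2 ρ - matLog2 σ)).trace).re : EReal) else ⊤

/-- The Petz Rényi divergence `D̄_α(ρ‖σ)` for `α ∈ (0,1)`, `+∞` when
`tr[ρ^α σ^{1−α}] = 0`. -/
def petzD (α : ℝ) {ι : Type*} [Fintype ι] [DecidableEq ι] (ρ σ : MatC ι) : EReal :=
  if 0 < (((matPow ρ α * matPow σ (1 - α)).trace).re) then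
    (((α - 1)⁻¹ * Real.logb 2 (((matPow ρ α * matPow σ (1 - α)).trace).re) : ℝ) : EReal)
  else ⊤

/-- The sandwiched Rényi divergence `D̃_α(ρ‖σ)` for `α > 1`. -/
def sandD (α : ℝ) {ι : Type*} [Fintype ι] [DecidableEq ι] (ρ σ : MatC ι) : EReal :=
  if SuppLe ρ σ then
    ((((α - 1)⁻¹ *
        Real.logb 2
          (((matPow (matPow σ ((1 - α) / (2 * α)) * ρ * matPow σ ((1 - α) / (2 * α))) α).trace).re)) : ℝ) : EReal)
  else ⊤

/-- The max-relative entropy `D_max(ρ‖σ)`. -/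
def Dmax {ι : Type*} [Fintype ι] (ρ σ : MatC ι) : EReal :=
  sInf {y : EReal | ∃ t : ℝ, ((t : ℂ) • σ - ρ).PosSemidef ∧ y = ((Real.logb 2 t : ℝ) : EReal)}

/-- Trace norm `‖X‖₁ = tr √(X†X)`. -/
def traceNorm {ι : Type*} [Fintype ι] [DecidableEq ι] (X : MatC ι) : ℝ :=
  ((matPow (X.conjTranspose * X) 2⁻¹).trace).re

/-- Generalized fidelity of subnormalized states. -/
def genFid {ι : Type*} [Fintype ι] [DecidableEq ι] (ρ σ : MatC ι) : ℝ :=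
  traceNorm (matPow ρ 2⁻¹ * matPow σ 2⁻¹) +
    Real.sqrt ((1 - (ρ.trace).re) * (1 - (σ.trace).re))

/-- Purified distance. -/
def purDist {ι : Type*} [Fintype ι] [DecidableEq ι] (ρ σ : MatC ι) : ℝ :=
  Real.sqrt (1 - (genFid ρ σ) ^ 2)

/-- The smooth max-relative entropy `D_max^ε(ρ‖σ)`. -/
def DmaxSmooth (ε : ℝ) {ι : Type*} [Fintype ι] [DecidableEq ι] (ρ σ : MatC ι) : EReal :=
  sInf {y : EReal | ∃ ρ' : MatC ι, ρ'.PosSemidef ∧ ((ρ'.trace).re ≤ 1) ∧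
    purDist ρ' ρ ≤ ε ∧ y = Dmax ρ' σ}

/-! ### Channel divergences -/

/-- A generalized state divergence: a function on pairs of matrices over every
finite system. -/
abbrev StateDiv :=
  ∀ (ι : Type) (_ : Fintype ι) (_ : DecidableEq ι), MatC ι → MatC ι → EReal

/-- The Umegaki relative entropy as a `StateDiv`. -/
def UmegakiD : StateDiv := fun ι fι dι ρ σ => @relEnt ι fι dι ρ σ

/-- The sandwiched Rényi divergence as a `StateDiv`. -/
def SandD (α : ℝ) : StateDiv := fun ι fι dι ρ σ => @sandD α ι fι dι ρ σ

/-- The Petz Rényi divergence as a `StateDiv`. -/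
def PetzD (α : ℝ) : StateDiv := fun ι fι dι ρ σ => @petzD α ι fι dι ρ σ

/-- The smooth max-relative entropy as a `StateDiv`. -/
def DmaxD (ε : ℝ) : StateDiv := fun ι fι dι ρ σ => @DmaxSmooth ε ι fι dι ρ σ

/-- The hypothesis-testing relative entropy as a `StateDiv`. -/
def DHD (ε : ℝ) : StateDiv := fun ι fι dι ρ σ => @DHe ι fι dι ε ρ σ

/-- The channel divergence induced by a state divergence: supremum over all
finite reference systems `R` and input states `ψ` on `R × A`. -/
def chanDiv (D : StateDiv) {A B : Type} [Fintype A] [Fintype B] [DecidableEq B]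
    (N M : MatC A →ₗ[ℂ] MatC B) : EReal :=
  sSup {x : EReal | ∃ (R : Type) (fR : Fintype R) (dR : DecidableEq R)
    (ψ : MatC (R × A)),
      letI := fR; letI := dR;
      IsDensity ψ ∧
        x = D (R × B) inferInstance inferInstance (idTensor R N ψ) (idTensor R M ψ)}

/-- The regularized channel divergence `sup_{n ≥ 1} (1/n) D(N^{⊗n}‖M^{⊗n})`. -/
def regChanDiv (D : StateDiv) {A B : Type} [Fintype A] [Fintype B] [DecidableEq B]
    (N M : MatC A →ₗ[ℂ] MatC B) : EReal :=
  sSup {x : EReal | ∃ n : ℕ, 1 ≤ n ∧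
    x = (((n : ℝ)⁻¹ : ℝ) : EReal) * chanDiv D (powChan N n) (powChan M n)}

/-- The amortized channel divergence. -/
def amortChanDiv (D : StateDiv) {A B : Type} [Fintype A] [Fintype B] [DecidableEq A]
    [DecidableEq B] (N M : MatC A →ₗ[ℂ] MatC B) : EReal :=
  sSup {x : EReal | ∃ (R : Type) (fR : Fintype R) (dR : DecidableEq R)
    (ψ φ : MatC (R × A)),
      letI := fR; letI := dR;
      IsDensity ψ ∧ IsDensity φ ∧
        x = D (R × B) inferInstance inferInstance (idTensor R N ψ) (idTensor R M φ)
            - D (R × A) inferInstance inferInstance ψ φ}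


/-! ### Discrimination strategies -/

/-- Tensor product of matrices over a (dependent) family of systems. -/
def piKron {n : ℕ} {κ : Fin n → Type} (X : ∀ i, MatC (κ i)) : MatC (∀ i, κ i) :=
  Matrix.of fun f g => ∏ i, X i (f i) (g i)

/-- A coherent (parallel) strategy for discriminating `n` uses of channels
`A → B`: a reference system `R`, an input state on `R × A^n` and a binary test. -/
structure CohStrategy (A B : Type) [Fintype A] [DecidableEq A] [Fintype B] [DecidableEq B]
    (n : ℕ) where
  R : Type
  [fR : Fintype R]
  [dR : DecidableEq R]
  ψ : MatC (R × (Fin n → A))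
  hψ : IsDensity ψ
  T : MatC (R × (Fin n → B))
  hT₁ : T.PosSemidef
  hT₂ : (1 - T).PosSemidef

attribute [instance] CohStrategy.fR CohStrategy.dR

/-- Type I error of a coherent strategy against the null hypothesis channel `N`. -/
def CohStrategy.typeI {A B : Type} [Fintype A] [DecidableEq A] [Fintype B] [DecidableEq B]
    {n : ℕ} (N : MatC A →ₗ[ℂ] MatC B) (S : CohStrategy A B n) : ℝ :=
  (((1 - S.T) * idTensor S.R (powChan N n) S.ψ).trace).re

/-- Type II error of a coherent strategy against the alternative channel `M`. -/
def CohStrategy.typeII {A B : Type} [Fintype A] [DecidableEq A] [Fintype B] [DecidableEq B]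
    {n : ℕ} (M : MatC A →ₗ[ℂ] MatC B) (S : CohStrategy A B n) : ℝ :=
  ((S.T * idTensor S.R (powChan M n) S.ψ).trace).re

/-- **Conjecture 1** (exponentially strong converse of channel hypothesis testing
under coherent strategies). -/
def Conjecture1 : Prop :=
  ∀ (A B : Type) (fA : Fintype A) (dA : DecidableEq A) (fB : Fintype B) (dB : DecidableEq B),
    letI := fA; letI := dA; letI := fB; letI := dB;
    ∀ (N M : MatC A →ₗ[ℂ] MatC B), IsCPTP N → IsCPTP M → (choiMat N).PosDef →
      ∀ S : (n : ℕ) → CohStrategy A B n,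
        regChanDiv UmegakiD N M <
          Filter.liminf
            (fun n : ℕ => -((((n : ℝ)⁻¹ : ℝ) : EReal) * elog2 ((S n).typeII M)))
            Filter.atTop →
        ∃ c : ℝ, 0 < c ∧ ∀ᶠ n : ℕ in Filter.atTop,
          1 - (S n).typeI N ≤ (2 : ℝ) ^ (-(c * n))


/-- A sequential (adaptive) strategy for discriminating `m + 1` uses of channels
`A → B`: reference systems `R 0, …, R m`, an initial state on `R 0 × A`, adaptive
update channels `P i : R i × B → R (i+1) × A`, and a final binary test. -/
structure SeqStrategy (A B : Type) [Fintype A] [DecidableEq A] [Fintype B] [DecidableEq B]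
    (m : ℕ) where
  R : Fin (m + 1) → Type
  [fR : ∀ i, Fintype (R i)]
  [dR : ∀ i, DecidableEq (R i)]
  ψ : MatC (R 0 × A)
  hψ : IsDensity ψ
  P : ∀ i : Fin m, MatC (R i.castSucc × B) →ₗ[ℂ] MatC (R i.succ × A)
  hP : ∀ i, IsCPTP (P i)
  T : MatC (R (Fin.last m) × B)
  hT₁ : T.PosSemidef
  hT₂ : (1 - T).PosSemidef

attribute [instance] SeqStrategy.fR SeqStrategy.dR

/-- The intermediate testing states of a sequential strategy when the unknown
channel is `N`: after `i + 1` uses of the channel, on system `R i × B`. -/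
def SeqStrategy.states {A B : Type} [Fintype A] [DecidableEq A] [Fintype B] [DecidableEq B]
    {m : ℕ} (S : SeqStrategy A B m) (N : MatC A →ₗ[ℂ] MatC B) :
    ∀ i : Fin (m + 1), MatC (S.R i × B) :=
  Fin.induction (idTensor (S.R 0) N S.ψ)
    (fun i prev => idTensor (S.R i.succ) N (S.P i prev))

/-- The final testing state of a sequential strategy for channel `N`. -/
def SeqStrategy.finalState {A B : Type} [Fintype A] [DecidableEq A] [Fintype B]
    [DecidableEq B] {m : ℕ} (S : SeqStrategy A B m) (N : MatC A →ₗ[ℂ] MatC B) :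
    MatC (S.R (Fin.last m) × B) :=
  S.states N (Fin.last m)

/-- Type I error of a sequential strategy against the null hypothesis channel `N`. -/
def SeqStrategy.typeI {A B : Type} [Fintype A] [DecidableEq A] [Fintype B] [DecidableEq B]
    {m : ℕ} (N : MatC A →ₗ[ℂ] MatC B) (S : SeqStrategy A B m) : ℝ :=
  (((1 - S.T) * S.finalState N).trace).re

/-- Type II error of a sequential strategy against the alternative channel `M`. -/
def SeqStrategy.typeII {A B : Type} [Fintype A] [DecidableEq A] [Fintype B] [DecidableEq B]
    {m : ℕ} (M : MatC A →ₗ[ℂ] MatC B) (S : SeqStrategy A B m) : ℝ :=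
  ((S.T * S.finalState M).trace).re

/-- A product strategy for discriminating `n` uses of channels `A → B`:
reference systems `R i`, product input states `φ i` on `R i × A`, and a binary
test on the joint output. -/
structure ProdStrategy (A B : Type) [Fintype A] [DecidableEq A] [Fintype B] [DecidableEq B]
    (n : ℕ) where
  R : Fin n → Type
  [fR : ∀ i, Fintype (R i)]
  [dR : ∀ i, DecidableEq (R i)]
  φ : ∀ i, MatC (R i × A)
  hφ : ∀ i, IsDensity (φ i)
  T : MatC (∀ i, R i × B)
  hT₁ : T.PosSemidef
  hT₂ : (1 - T).PosSemidef

attribute [instance] ProdStrategy.fR ProdStrategy.dR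

/-- The testing state of a product strategy for channel `N`. -/
def ProdStrategy.state {A B : Type} [Fintype A] [DecidableEq A] [Fintype B] [DecidableEq B]
    {n : ℕ} (S : ProdStrategy A B n) (N : MatC A →ₗ[ℂ] MatC B) : MatC (∀ i, S.R i × B) :=
  piKron fun i => idTensor (S.R i) N (S.φ i)

/-- Type I error of a product strategy against the null hypothesis channel `N`. -/
def ProdStrategy.typeI {A B : Type} [Fintype A] [DecidableEq A] [Fintype B] [DecidableEq B]
    {n : ℕ} (N : MatC A →ₗ[ℂ] MatC B) (S : ProdStrategy A B n) : ℝ :=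
  (((1 - S.T) * S.state N).trace).re

/-- Type II error of a product strategy against the alternative channel `M`. -/
def ProdStrategy.typeII {A B : Type} [Fintype A] [DecidableEq A] [Fintype B] [DecidableEq B]
    {n : ℕ} (M : MatC A →ₗ[ℂ] MatC B) (S : ProdStrategy A B n) : ℝ :=
  ((S.T * S.state M).trace).re

/-- Extra: the `n`-fold power of a channel acting on matrices indexed by
`Fin n → R × A` (reference `R` paired with each channel input). -/
noncomputable def pairPow (R : Type) {A B : Type} (N : MatC A →ₗ[ℂ] MatC B) (n : ℕ) :
    MatC (Fin n → R × A) →ₗ[ℂ] MatC (Fin n → R × B) :=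
  reindexChan (Equiv.arrowProdEquivProdArrow (Fin n) (fun _ => R) (fun _ => A)).symm
    (Equiv.arrowProdEquivProdArrow (Fin n) (fun _ => R) (fun _ => B)).symm
    (idTensor (Fin n → R) (powChan N n))

/-- The optimal hypothesis-testing relative entropy over product strategies. -/
noncomputable def DHpro (ε : ℝ) {A B : Type} [Fintype A] [DecidableEq A] [Fintype B]
    [DecidableEq B] (N M : MatC A →ₗ[ℂ] MatC B) (n : ℕ) : EReal :=
  sSup {x : EReal | ∃ (R : Fin n → Type) (fR : ∀ i, Fintype (R i))
    (dR : ∀ i, DecidableEq (R i)) (φ : ∀ i, MatC (R i × A)),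
      letI := fR; letI := dR;
      (∀ i, IsDensity (φ i)) ∧
        x = DHe ε (piKron fun i => idTensor (R i) N (φ i))
              (piKron fun i => idTensor (R i) M (φ i))}

/-- The optimal hypothesis-testing relative entropy over sequential strategies for
`m + 1` channel uses. -/
noncomputable def DHseq (ε : ℝ) {A B : Type} [Fintype A] [DecidableEq A] [Fintype B]
    [DecidableEq B] (N M : MatC A →ₗ[ℂ] MatC B) (m : ℕ) : EReal :=
  sSup {x : EReal | ∃ S : SeqStrategy A B m,
    x = DHe ε (S.finalState N) (S.finalState M)}

/-- The strong converse exponent of channel discrimination under product strategies. -/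
noncomputable def scExpPRO (r : ℝ) {A B : Type} [Fintype A] [DecidableEq A] [Fintype B]
    [DecidableEq B] (N M : MatC A →ₗ[ℂ] MatC B) : EReal :=
  sInf {e : EReal | ∃ S : (n : ℕ) → ProdStrategy A B n,
    (Filter.limsup (fun n : ℕ => (((n : ℝ)⁻¹ : ℝ) : EReal) * elog2 ((S n).typeII M))
        Filter.atTop ≤ ((-r : ℝ) : EReal)) ∧
    e = -Filter.liminf (fun n : ℕ => (((n : ℝ)⁻¹ : ℝ) : EReal) * elog2 (1 - (S n).typeI N))
        Filter.atTop}

/-- The error exponent of channel discrimination under product strategies. -/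
noncomputable def erExpPRO (r : ℝ) {A B : Type} [Fintype A] [DecidableEq A] [Fintype B]
    [DecidableEq B] (N M : MatC A →ₗ[ℂ] MatC B) : EReal :=
  sSup {e : EReal | ∃ S : (n : ℕ) → ProdStrategy A B n,
    (Filter.limsup (fun n : ℕ => (((n : ℝ)⁻¹ : ℝ) : EReal) * elog2 ((S n).typeII M))
        Filter.atTop ≤ ((-r : ℝ) : EReal)) ∧
    e = -Filter.limsup (fun n : ℕ => (((n : ℝ)⁻¹ : ℝ) : EReal) * elog2 ((S n).typeI N))
        Filter.atTop}

/-- The error exponent of channel discrimination under coherent strategies. -/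
noncomputable def erExpCOH (r : ℝ) {A B : Type} [Fintype A] [DecidableEq A] [Fintype B]
    [DecidableEq B] (N M : MatC A →ₗ[ℂ] MatC B) : EReal :=
  sSup {e : EReal | ∃ S : (n : ℕ) → CohStrategy A B n,
    (Filter.limsup (fun n : ℕ => (((n : ℝ)⁻¹ : ℝ) : EReal) * elog2 ((S n).typeII M))
        Filter.atTop ≤ ((-r : ℝ) : EReal)) ∧
    e = -Filter.limsup (fun n : ℕ => (((n : ℝ)⁻¹ : ℝ) : EReal) * elog2 ((S n).typeI N))
        Filter.atTop}

section Aux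
variable {ι : Type*} [Fintype ι] [DecidableEq ι]

lemma eig_quad {X : MatC ι} (hX : X.IsHermitian) (a b : ℝ)
    (hq : (X - (a : ℂ) • 1) * (X - (b : ℂ) • 1) = 0) (i : ι) :
    hX.eigenvalues i = a ∨ hX.eigenvalues i = b := by
  set v : ι → ℂ := ⇑(hX.eigenvectorBasis i) with hv
  have hv0 : v ≠ 0 := by
    have := hX.eigenvectorBasis.orthonormal.ne_zero i
    intro h
    apply this
    ext j
    exact congrFun h j
  have hmv : X.mulVec v = (hX.eigenvalues i : ℂ) • v := by
    have h0 := hX.mulVec_eigenvectorBasis i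
    rw [RCLike.real_smul_eq_coe_smul (K := ℂ)] at h0
    exact h0
  set lam : ℂ := ((hX.eigenvalues i : ℝ) : ℂ) with hlam
  have h1 : ((X - (a : ℂ) • 1) * (X - (b : ℂ) • 1)).mulVec v
      = ((lam - a) * (lam - b)) • v := by
    rw [← Matrix.mulVec_mulVec]
    have h2 : (X - (b : ℂ) • 1).mulVec v = (lam - b) • v := by
      rw [Matrix.sub_mulVec, hmv, Matrix.smul_mulVec, Matrix.one_mulVec, sub_smul]
    rw [h2, Matrix.mulVec_smul, Matrix.sub_mulVec, hmv, Matrix.smul_mulVec,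
      Matrix.one_mulVec, ← sub_smul, smul_smul, mul_comm]
  rw [hq] at h1
  have h3 : ((lam - a) * (lam - b)) • v = 0 := by
    rw [← h1]; simp
  rcases smul_eq_zero.mp h3 with h | h
  · rcases mul_eq_zero.mp h with h | h
    · left
      have h2 : ((hX.eigenvalues i : ℝ) : ℂ) = (a : ℂ) := by
        rw [← hlam]; linear_combination h
      exact_mod_cast h2
    · right
      have h2 : ((hX.eigenvalues i : ℝ) : ℂ) = (b : ℂ) := by
        rw [← hlam]; linear_combination h
      exact_mod_cast h2
  · exact absurd h hv0

lemma funCalc_affine {X : MatC ι} (hX : X.IsHermitian) (f : ℝ → ℝ) (c₀ c₁ : ℝ)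
    (h : ∀ i, f (hX.eigenvalues i) = c₀ + c₁ * hX.eigenvalues i) :
    funCalc X f = (c₀ : ℂ) • 1 + (c₁ : ℂ) • X := by
  rw [funCalc, dif_pos hX]
  set U : MatC ι := (hX.eigenvectorUnitary : MatC ι) with hU
  have hUU : U * star U = 1 := (Matrix.mem_unitaryGroup_iff).mp hX.eigenvectorUnitary.2
  have hdiag : (Matrix.diagonal fun i => (f (hX.eigenvalues i) : ℂ))
      = (c₀ : ℂ) • 1 + (c₁ : ℂ) • Matrix.diagonal (RCLike.ofReal ∘ hX.eigenvalues) := by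
    have hc : ∀ i, ((f (hX.eigenvalues i) : ℝ) : ℂ) = c₀ + c₁ * (hX.eigenvalues i : ℂ) := by
      intro i; rw [h i]; push_cast; ring
    ext i j
    rcases eq_or_ne i j with rfl | hij
    · simp [Matrix.one_apply, hc i]
    · simp [Matrix.diagonal_apply_ne _ hij, Matrix.one_apply_ne hij]
  rw [hdiag, Matrix.mul_add, Matrix.add_mul, Matrix.mul_smul, Matrix.smul_mul, mul_one, hUU,
    Matrix.mul_smul, Matrix.smul_mul]
  congr 1
  conv_rhs => rw [hX.spectral_theorem, Unitary.conjStarAlgAut_apply]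

lemma trace_eq_sum_eig {X : MatC ι} (hX : X.IsHermitian) :
    X.trace = ∑ i, (hX.eigenvalues i : ℂ) := by
  conv_lhs => rw [hX.spectral_theorem, Unitary.conjStarAlgAut_apply]
  rw [Matrix.trace_mul_cycle]
  rw [(Matrix.mem_unitaryGroup_iff').mp hX.eigenvectorUnitary.2, Matrix.one_mul,
    Matrix.trace_diagonal]
  rfl

end Aux

lemma pow_aux : ∀ n : ℕ, 9 ≤ n → (n + 1)^4 < 3^n := by
  intro n hn
  induction n with
  | zero => omega
  | succ m ih =>
    rcases Nat.lt_or_ge m 9 with h | h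
    · have hm : m = 8 := by omega
      subst hm; norm_num
    · have h1 := ih h
      obtain ⟨k, rfl⟩ : ∃ k, m = k + 9 := ⟨m - 9, by omega⟩
      have h2 : (k + 9 + 2)^4 ≤ 3 * (k + 9 + 1)^4 := by
        nlinarith [Nat.zero_le (k^4), Nat.zero_le (k^3), Nat.zero_le (k^2), Nat.zero_le k]
      calc (k + 9 + 1 + 1)^4 = (k + 9 + 2)^4 := by ring
        _ ≤ 3 * (k + 9 + 1)^4 := h2
        _ < 3 * 3^(k + 9) := by omega
        _ = 3^(k + 9 + 1) := by ring

lemma sqrt64 : Real.sqrt 64 = 8 := by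
  rw [show (64 : ℝ) = 8^2 by norm_num]
  exact Real.sqrt_sq (by norm_num)

lemma key_pow (d : ℕ) (hd : 64 ≤ d) : ((1 : ℝ) + d)^2 < (3 : ℝ) ^ (Real.sqrt d) := by
  have hd0 : (0 : ℝ) < d := by positivity
  rcases le_or_gt 81 d with h81 | h81
  · set n := Nat.sqrt d with hn
    have hn9 : 9 ≤ n := Nat.le_sqrt.mpr (by omega)
    have hdlt : d < (n + 1)^2 := by
      have := Nat.lt_succ_sqrt d
      nlinarith [this]
    have h1 : (1 : ℝ) + d ≤ ((n : ℝ) + 1)^2 := by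
      have h1' : 1 + d ≤ (n + 1)^2 := by linarith [hdlt]
      exact_mod_cast h1'
    have h2 : ((1 : ℝ) + d)^2 ≤ ((n : ℝ) + 1)^4 := by nlinarith
    have h4 : ((n : ℝ) + 1)^4 < (3 : ℝ)^n := by exact_mod_cast pow_aux n hn9
    have h5 : (3 : ℝ)^(n : ℕ) = (3 : ℝ) ^ ((n : ℝ) : ℝ) := by
      rw [Real.rpow_natCast]
    have h6 : (n : ℝ) ≤ Real.sqrt d := by
      rw [show ((n : ℝ)) = Real.sqrt ((n : ℝ)^2) by rw [Real.sqrt_sq (by positivity)]]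
      apply Real.sqrt_le_sqrt
      exact_mod_cast Nat.sqrt_le' d
    calc ((1 : ℝ) + d)^2 ≤ ((n : ℝ) + 1)^4 := h2
      _ < (3 : ℝ)^(n : ℕ) := h4
      _ = (3 : ℝ) ^ ((n : ℝ) : ℝ) := h5
      _ ≤ (3 : ℝ) ^ (Real.sqrt d) := Real.rpow_le_rpow_of_exponent_le (by norm_num) h6
  · have h8 : (8 : ℝ) ≤ Real.sqrt d := by
      rw [← sqrt64]
      apply Real.sqrt_le_sqrt
      exact_mod_cast hd
    have h38 : (3 : ℝ) ^ (8 : ℝ) = 6561 := by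
      rw [show (8 : ℝ) = ((8 : ℕ) : ℝ) by norm_num, Real.rpow_natCast]; norm_num
    rcases Nat.lt_or_ge d 80 with h80 | h80
    · have hlt : ((1 : ℝ) + d)^2 < 6561 := by
        have : (d : ℝ) ≤ 79 := by exact_mod_cast Nat.le_of_lt_succ h80
        nlinarith
      calc ((1 : ℝ) + d)^2 < 6561 := hlt
        _ = (3 : ℝ) ^ (8 : ℝ) := h38.symm
        _ ≤ (3 : ℝ) ^ (Real.sqrt d) := Real.rpow_le_rpow_of_exponent_le (by norm_num) h8
    · have hd80 : d = 80 := by omega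
      subst hd80
      have h8' : (8 : ℝ) < Real.sqrt ((80 : ℕ) : ℝ) := by
        rw [← sqrt64]
        exact Real.sqrt_lt_sqrt (by norm_num) (by norm_num)
      have he : ((1:ℝ) + ((80:ℕ) : ℝ))^2 = 6561 := by norm_num
      rw [he, ← h38]
      exact Real.rpow_lt_rpow_of_exponent_lt (by norm_num) h8'

lemma final_ineq (d : ℕ) (hd : 64 ≤ d) :
    (Real.logb 2 (1 + (d:ℝ)))^2 / d < (Real.logb 2 3)^2 / 4 := by
  have hd0 : (0 : ℝ) < d := by positivity
  have hk := key_pow d hd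
  have hlog : 2 * Real.log (1 + (d:ℝ)) < Real.sqrt d * Real.log 3 := by
    have h := Real.log_lt_log (by positivity) hk
    rw [Real.log_pow, Real.log_rpow (by norm_num)] at h
    push_cast at h ⊢
    linarith
  have hl1 : (0 : ℝ) ≤ Real.log (1 + (d:ℝ)) := Real.log_nonneg (by linarith)
  have hsq : (Real.sqrt d)^2 = d := Real.sq_sqrt hd0.le
  have hmain : 4 * (Real.log (1 + (d:ℝ)))^2 < d * (Real.log 3)^2 := by
    have h0 : (0 : ℝ) ≤ 2 * Real.log (1 + (d:ℝ)) := by linarith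
    have h1 : (2 * Real.log (1 + (d:ℝ)))^2 < (Real.sqrt d * Real.log 3)^2 :=
      pow_lt_pow_left₀ hlog h0 (by norm_num)
    have h2 : (Real.sqrt d * Real.log 3)^2 = d * (Real.log 3)^2 := by
      rw [mul_pow, hsq]
    nlinarith [h1, h2]
  have hl2 : (0 : ℝ) < Real.log 2 := Real.log_pos (by norm_num)
  have hgoal : (Real.log (1 + (d:ℝ)))^2 / (Real.log 2)^2 / d
      < (Real.log 3)^2 / (Real.log 2)^2 / 4 := by
    rw [div_div, div_div, div_lt_div_iff₀ (by positivity) (by positivity)]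
    nlinarith [mul_lt_mul_of_pos_right hmain (mul_pos hl2 hl2)]
  rw [Real.logb, Real.logb, div_pow, div_pow]
  exact hgoal

theorem stmt5 (d : ℕ) (hd : 64 ≤ d) (hdeven : Even d)
    (P : MatC (Fin d)) (hP : P.IsHermitian) (hP2 : P * P = P) (hrank : P.rank = d / 2)
    (σ τ : MatC (Fin d)) (t : ℝ)
    (ht : t = (2 * (d:ℝ))⁻¹)
    (hσdef : σ = ((d : ℂ))⁻¹ • 1)
    (hτdef : τ = (t : ℂ) • P + ((3 * t : ℝ) : ℂ) • (1 - P)) :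
    IsDensity τ ∧ (τ - (t : ℂ) • 1).PosSemidef ∧
    (((σ * (matLog2 τ * matLog2 τ)).trace).re - (((σ * matLog2 τ).trace).re) ^ 2
        = (Real.logb 2 3) ^ 2 / 4) ∧
    (maxEig σ * (Real.logb 2 (1 + t⁻¹ - d)) ^ 2 <
        ((σ * (matLog2 τ * matLog2 τ)).trace).re - (((σ * matLog2 τ).trace).re) ^ 2) ∧
    maxEig σ * (Real.logb 2 (1 + t⁻¹ - d)) ^ 2 = (Real.logb 2 (1 + (d:ℝ))) ^ 2 / d := by
  obtain ⟨r, hr⟩ := hdeven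
  have hr32 : 32 ≤ r := by omega
  have hd0 : 0 < d := by omega
  have hdR : (0 : ℝ) < d := by positivity
  have hdC : (d : ℂ) ≠ 0 := by exact_mod_cast hdR.ne'
  have hrC : (d : ℂ) = 2 * (r : ℂ) := by
    rw [hr]; push_cast; ring
  have ht0 : 0 < t := by rw [ht]; positivity
  have htC : (t : ℂ) = (2 * (d : ℂ))⁻¹ := by rw [ht]; push_cast; ring
  set Q : MatC (Fin d) := 1 - P with hQdef
  have hQ2 : Q * Q = Q := by
    simp only [hQdef, Matrix.sub_mul, Matrix.mul_sub, Matrix.one_mul, Matrix.mul_one, hP2]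
    abel
  have hPQ : P * Q = 0 := by
    simp only [hQdef, Matrix.mul_sub, Matrix.mul_one, hP2, sub_self]
  have hQP : Q * P = 0 := by
    simp only [hQdef, Matrix.sub_mul, Matrix.one_mul, hP2, sub_self]
  have hQherm : Q.IsHermitian := Matrix.isHermitian_one.sub hP
  -- Hermiticity of τ
  have hstar_t : star ((t : ℝ) : ℂ) = ((t : ℝ) : ℂ) := by
    simp [Complex.star_def, Complex.conj_ofReal]
  have hstar_3t : star (((3 * t : ℝ)) : ℂ) = (((3 * t : ℝ)) : ℂ) := by
    simp [Complex.star_def, Complex.conj_ofReal]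
  have hτherm : τ.IsHermitian := by
    rw [hτdef]
    unfold Matrix.IsHermitian
    rw [Matrix.conjTranspose_add, Matrix.conjTranspose_smul, Matrix.conjTranspose_smul,
      hstar_t, hstar_3t, hP.eq, hQherm.eq]
  -- quadratic relation for τ
  have h1 : τ - (t : ℂ) • 1 = (((2 * t : ℝ)) : ℂ) • Q := by
    rw [hτdef, hQdef]; push_cast; module
  have h2 : τ - (((3 * t : ℝ)) : ℂ) • 1 = (-((2 * t : ℝ)) : ℂ) • P := by
    rw [hτdef, hQdef]; push_cast; module
  have hquad : (τ - (t : ℂ) • 1) * (τ - (((3 * t : ℝ)) : ℂ) • 1) = 0 := by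
    rw [h1, h2, Matrix.smul_mul, Matrix.mul_smul, hQP]
    simp
  have heig : ∀ i, hτherm.eigenvalues i = t ∨ hτherm.eigenvalues i = 3 * t :=
    eig_quad hτherm t (3 * t) hquad
  -- PSD of τ
  have hτpsd : τ.PosSemidef := by
    apply (Matrix.IsHermitian.posSemidef_iff_eigenvalues_nonneg hτherm).mpr
    intro i
    rcases heig i with h | h <;> rw [h, Pi.zero_apply] <;> linarith
  -- trace of P
  have hPquad : (P - ((0 : ℝ) : ℂ) • 1) * (P - ((1 : ℝ) : ℂ) • 1) = 0 := by
    push_cast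
    rw [zero_smul, sub_zero, one_smul, Matrix.mul_sub, Matrix.mul_one, hP2, sub_self]
  have heigP := eig_quad hP 0 1 hPquad
  have hsumP : ∑ i, hP.eigenvalues i = (r : ℝ) := by
    have hsum : ∑ i, hP.eigenvalues i
        = ∑ i, (if hP.eigenvalues i ≠ 0 then (1 : ℝ) else 0) := by
      apply Finset.sum_congr rfl
      intro i _
      rcases heigP i with h | h <;> simp [h]
    rw [hsum, Finset.sum_boole]
    have hcard : (Finset.univ.filter fun i => hP.eigenvalues i ≠ 0).card
        = Fintype.card {i // hP.eigenvalues i ≠ 0} := (Fintype.card_subtype _).symm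
    rw [hcard, ← hP.rank_eq_card_non_zero_eigs, hrank]
    have : d / 2 = r := by omega
    rw [this]
  have htrP : P.trace = (r : ℂ) := by
    rw [trace_eq_sum_eig hP]
    rw [show ∑ i, ((hP.eigenvalues i : ℝ) : ℂ) = (((∑ i, hP.eigenvalues i : ℝ)) : ℂ) by
      push_cast; rfl]
    rw [hsumP]
    norm_cast
  have htr1 : (1 : MatC (Fin d)).trace = (d : ℂ) := by
    simp [Matrix.trace_one]
  have htrQ : Q.trace = (r : ℂ) := by
    rw [hQdef, Matrix.trace_sub, htr1, htrP, hrC]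
    push_cast
    try ring
    try norm_cast
  -- trace of τ
  have htrτ : τ.trace = 1 := by
    have hrne : (r : ℂ) ≠ 0 := by
      have : (0:ℕ) < r := by omega
      exact_mod_cast Nat.cast_ne_zero.mpr (by omega)
    rw [hτdef, Matrix.trace_add, Matrix.trace_smul, Matrix.trace_smul, htrP, htrQ]
    push_cast
    rw [htC, hrC]
    push_cast
    field_simp
    try ring
    exact mul_inv_cancel₀ hrne
  -- trace of τ²
  have hττ : τ * τ = ((t^2 : ℝ) : ℂ) • P + ((9 * t^2 : ℝ) : ℂ) • Q := by
    rw [hτdef]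
    simp only [Matrix.add_mul, Matrix.mul_add, Matrix.smul_mul, Matrix.mul_smul,
      hP2, hQ2, hPQ, hQP, smul_smul, smul_zero, add_zero, zero_add]
    push_cast
    module
  have htrτ2 : (τ * τ).trace = ((t^2 : ℝ) : ℂ) * r + ((9 * t^2 : ℝ) : ℂ) * r := by
    rw [hττ, Matrix.trace_add, Matrix.trace_smul, Matrix.trace_smul, htrP, htrQ]
    simp [smul_eq_mul]
  -- matLog2 τ
  set c₁ : ℝ := Real.logb 2 3 / (2 * t) with hc₁
  set c₀ : ℝ := Real.logb 2 t - Real.logb 2 3 / 2 with hc₀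
  have hL : matLog2 τ = (c₀ : ℂ) • 1 + (c₁ : ℂ) • τ := by
    apply funCalc_affine hτherm _ c₀ c₁
    intro i
    rcases heig i with h | h <;> rw [h]
    · rw [if_neg (by linarith : ¬ t ≤ 0), hc₀, hc₁]
      field_simp
      try ring
    · rw [if_neg (by nlinarith : ¬ 3 * t ≤ 0), hc₀, hc₁]
      rw [Real.logb_mul (by norm_num) (ne_of_gt ht0)]
      field_simp
      try ring
  -- traces with σ
  have hσL : (σ * matLog2 τ).trace = ((c₀ + c₁ * (d : ℝ)⁻¹ : ℝ) : ℂ) := by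
    rw [hσdef, hL, Matrix.smul_mul, Matrix.one_mul]
    simp only [Matrix.trace_add, Matrix.trace_smul, htr1, htrτ, smul_eq_mul]
    push_cast
    field_simp
    try ring
  have hσLL : (σ * (matLog2 τ * matLog2 τ)).trace
      = ((c₀^2 + 2 * c₀ * c₁ * (d : ℝ)⁻¹ + c₁^2 * (10 * t^2 * (d : ℝ) / 2) * (d : ℝ)⁻¹ : ℝ) : ℂ) := by
    rw [hσdef, hL, Matrix.smul_mul, Matrix.one_mul]
    simp only [Matrix.add_mul, Matrix.mul_add, Matrix.smul_mul, Matrix.mul_smul, Matrix.mul_one, Matrix.one_mul,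
      Matrix.trace_add, Matrix.trace_smul, htr1, htrτ, htrτ2, smul_eq_mul, smul_smul]
    have hrR : (r : ℂ) = (d : ℂ) / 2 := by rw [hrC]; ring
    rw [hrR]
    push_cast
    field_simp
    ring
  -- real parts
  have hre1 : ((σ * matLog2 τ).trace).re = c₀ + c₁ * (d : ℝ)⁻¹ := by
    rw [hσL, Complex.ofReal_re]
  have hre2 : ((σ * (matLog2 τ * matLog2 τ)).trace).re
      = c₀^2 + 2 * c₀ * c₁ * (d : ℝ)⁻¹ + c₁^2 * (10 * t^2 * (d : ℝ) / 2) * (d : ℝ)⁻¹ := by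
    rw [hσLL, Complex.ofReal_re]
  have hdne : (d : ℝ) ≠ 0 := hdR.ne'
  have hEq3 : ((σ * (matLog2 τ * matLog2 τ)).trace).re - (((σ * matLog2 τ).trace).re) ^ 2
      = (Real.logb 2 3) ^ 2 / 4 := by
    rw [hre1, hre2, hc₀, hc₁, ht]
    field_simp
    ring
  -- maxEig σ
  have hσherm : σ.IsHermitian := by
    rw [hσdef]
    unfold Matrix.IsHermitian
    rw [Matrix.conjTranspose_smul, Matrix.conjTranspose_one]
    congr 1
    simp [Complex.star_def]
  have hσz : σ - (((d : ℝ)⁻¹ : ℝ) : ℂ) • 1 = 0 := by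
    rw [hσdef]
    have : (((d : ℝ)⁻¹ : ℝ) : ℂ) = (d : ℂ)⁻¹ := by push_cast; ring
    rw [this, sub_self]
  have hσquad : (σ - (((d : ℝ)⁻¹ : ℝ) : ℂ) • 1) * (σ - (((d : ℝ)⁻¹ : ℝ) : ℂ) • 1) = 0 := by
    rw [hσz, Matrix.zero_mul]
  have heigσ := eig_quad hσherm (d : ℝ)⁻¹ (d : ℝ)⁻¹ hσquad
  have hne : Nonempty (Fin d) := ⟨⟨0, hd0⟩⟩
  have hmax : maxEig σ = (d : ℝ)⁻¹ := by
    rw [maxEig, dif_pos hσherm]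
    have : ∀ i, hσherm.eigenvalues i = (d : ℝ)⁻¹ := fun i => (heigσ i).elim id id
    rw [show hσherm.eigenvalues = fun _ => (d : ℝ)⁻¹ from funext this]
    exact ciSup_const
  -- PSD of τ - t•1
  have hpsd2 : (τ - (t : ℂ) • 1).PosSemidef := by
    rw [h1]
    have hMherm : ((((2 * t : ℝ)) : ℂ) • Q).IsHermitian := by
      unfold Matrix.IsHermitian
      rw [Matrix.conjTranspose_smul, hQherm.eq]
      congr 1
      simp [Complex.star_def, Complex.conj_ofReal]
    apply (Matrix.IsHermitian.posSemidef_iff_eigenvalues_nonneg hMherm).mpr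
    have hq2 : ((((2 * t : ℝ)) : ℂ) • Q - ((0 : ℝ) : ℂ) • 1)
        * ((((2 * t : ℝ)) : ℂ) • Q - (((2 * t : ℝ)) : ℂ) • 1) = 0 := by
      push_cast
      rw [zero_smul, sub_zero]
      have hQ1 : ((2 : ℂ) * (t : ℂ)) • Q - ((2 : ℂ) * (t : ℂ)) • 1
          = (-((2 : ℂ) * (t : ℂ))) • P := by
        rw [hQdef]; module
      rw [hQ1, Matrix.smul_mul, Matrix.mul_smul, hQP]
      simp
    have heigM := eig_quad hMherm 0 (2 * t) hq2
    intro i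
    rcases heigM i with h | h <;> rw [h, Pi.zero_apply] <;> linarith
  -- final rewriting of the logb argument
  have htinv : t⁻¹ = 2 * (d : ℝ) := by rw [ht, inv_inv]
  have harg : (1 : ℝ) + t⁻¹ - d = 1 + d := by rw [htinv]; ring
  have hEq5 : maxEig σ * (Real.logb 2 (1 + t⁻¹ - d)) ^ 2
      = (Real.logb 2 (1 + (d : ℝ))) ^ 2 / d := by
    rw [harg, hmax]
    field_simp
  refine ⟨⟨hτpsd, htrτ⟩, hpsd2, hEq3, ?_, hEq5⟩
  rw [hEq5, hEq3]
  exact final_ineq d hd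

end
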